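/- arXiv:2404.12483 — 3 statements merged into one kernel-verified Lean document; each statement's English description precedes it below -/
import Mathlib

section
/- Let 0 < I_1 ≤ I_2 ≤ ... ≤ I_K be reals, set I_0 = 0, and let λ_1,...,λ_K ∈ ℝ. Then Σ_{i=1}^{K} (I_i − I_{i−1})·(Σ_{k=i}^{K} λ_k/√I_k)² = Σ_{i=1}^{K} Σ_{j=1}^{K} λ_i·λ_j·√(I_{min{i,j}}/I_{max{i,j}}). -/
open Finset

lemma tel_aux (I : ℕ → ℝ) (m : ℕ) :
    ∑ i ∈ Finset.Icc 1 m, (I i - I (i - 1)) = I m - I 0 := by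
  induction m with
  | zero => simp
  | succ n ih =>
    rw [Finset.sum_Icc_succ_top (by omega : 1 ≤ n + 1), ih]
    simp only [Nat.add_sub_cancel]
    ring

lemma sqrt_div_aux (a b : ℝ) (ha : 0 < a) (hb : 0 < b) :
    a / (Real.sqrt a * Real.sqrt b) = Real.sqrt (a / b) := by
  rw [Real.sqrt_div ha.le]
  nth_rewrite 1 [← Real.mul_self_sqrt ha.le]
  exact mul_div_mul_left _ _ (Real.sqrt_ne_zero'.mpr ha)

/-- For nondecreasing positive information levels
`0 < I 1 ≤ ... ≤ I K` with the convention `I 0 = 0` and any reals `λ_1, ..., λ_K`: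
`∑_{i=1}^K (I_i − I_{i−1}) (∑_{k=i}^K λ_k/√I_k)²
  = ∑_{i=1}^K ∑_{j=1}^K λ_i λ_j √(I_{min{i,j}}/I_{max{i,j}})`. -/
theorem quadratic_form_of_group_sequential_covariance
    (K : ℕ) (I : ℕ → ℝ) (lam : ℕ → ℝ)
    (hI0 : I 0 = 0)
    (hIpos : ∀ k, 1 ≤ k → k ≤ K → 0 < I k)
    (hmono : ∀ i j, 1 ≤ i → i ≤ j → j ≤ K → I i ≤ I j) :
    ∑ i ∈ Finset.Icc 1 K,
        (I i - I (i - 1)) * (∑ k ∈ Finset.Icc i K, lam k / Real.sqrt (I k)) ^ 2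
      = ∑ i ∈ Finset.Icc 1 K, ∑ j ∈ Finset.Icc 1 K,
          lam i * lam j * Real.sqrt (I (min i j) / I (max i j)) := by
  have key : ∀ k l, k ∈ Finset.Icc 1 K → l ∈ Finset.Icc 1 K →
      I (min k l) * (lam k / Real.sqrt (I k) * (lam l / Real.sqrt (I l)))
      = lam k * lam l * Real.sqrt (I (min k l) / I (max k l)) := by
    intro k l hk hl
    simp only [Finset.mem_Icc] at hk hl
    have hkpos := hIpos k hk.1 hk.2
    have hlpos := hIpos l hl.1 hl.2
    have hks := Real.sqrt_ne_zero'.mpr hkpos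
    have hls := Real.sqrt_ne_zero'.mpr hlpos
    rcases le_total k l with h | h
    · rw [min_eq_left h, max_eq_right h, ← sqrt_div_aux (I k) (I l) hkpos hlpos]
      field_simp
    · rw [min_eq_right h, max_eq_left h, ← sqrt_div_aux (I l) (I k) hlpos hkpos]
      field_simp
  -- step 1: turn LHS into triple sum over box
  have step1 :
      ∑ i ∈ Finset.Icc 1 K,
        (I i - I (i - 1)) * (∑ k ∈ Finset.Icc i K, lam k / Real.sqrt (I k)) ^ 2
      = ∑ i ∈ Finset.Icc 1 K, ∑ k ∈ Finset.Icc 1 K, ∑ l ∈ Finset.Icc 1 K,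
          (if i ≤ k then (if i ≤ l then
            (I i - I (i - 1)) * (lam k / Real.sqrt (I k) * (lam l / Real.sqrt (I l)))
            else 0) else 0) := by
    refine Finset.sum_congr rfl ?_
    intro i hi
    simp only [Finset.mem_Icc] at hi
    have hIcc : Finset.Icc i K = (Finset.Icc 1 K).filter (fun k => i ≤ k) := by
      ext x; simp only [Finset.mem_Icc, Finset.mem_filter]; omega
    rw [sq, Finset.sum_mul_sum, hIcc]
    rw [Finset.sum_filter]
    rw [Finset.mul_sum]
    refine Finset.sum_congr rfl ?_
    intro k _
    rw [Finset.sum_filter]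
    by_cases h : i ≤ k
    · simp only [h, if_true]
      rw [Finset.mul_sum]
      refine Finset.sum_congr rfl ?_
      intro l _
      by_cases h' : i ≤ l <;> simp [h']
    · simp [h]
  rw [step1, Finset.sum_comm]
  refine Finset.sum_congr rfl ?_
  intro k hk
  rw [Finset.sum_comm]
  refine Finset.sum_congr rfl ?_
  intro l hl
  -- inner sum over i
  have hk' := hk; have hl' := hl
  simp only [Finset.mem_Icc] at hk' hl'
  have hfilter : ((Finset.Icc 1 K).filter (fun i => i ≤ k)).filter (fun i => i ≤ l)
      = Finset.Icc 1 (min k l) := by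
    ext x
    simp only [Finset.mem_Icc, Finset.mem_filter, le_min_iff]
    omega
  calc ∑ i ∈ Finset.Icc 1 K,
        (if i ≤ k then (if i ≤ l then
          (I i - I (i - 1)) * (lam k / Real.sqrt (I k) * (lam l / Real.sqrt (I l)))
          else 0) else 0)
      = ∑ i ∈ ((Finset.Icc 1 K).filter (fun i => i ≤ k)).filter (fun i => i ≤ l),
          (I i - I (i - 1)) * (lam k / Real.sqrt (I k) * (lam l / Real.sqrt (I l))) := by
        rw [Finset.sum_filter, Finset.sum_filter]
    _ = (∑ i ∈ Finset.Icc 1 (min k l), (I i - I (i - 1)))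
          * (lam k / Real.sqrt (I k) * (lam l / Real.sqrt (I l))) := by
        rw [hfilter, Finset.sum_mul]
    _ = I (min k l) * (lam k / Real.sqrt (I k) * (lam l / Real.sqrt (I l))) := by
        rw [tel_aux, hI0, sub_zero]
    _ = lam k * lam l * Real.sqrt (I (min k l) / I (max k l)) := key k l hk hl
end

section
/- Let N = m + n with m, n ≥ 1 and N ≥ 2, let z_1,...,z_N ∈ ℝ with grand mean z̄ = (1/N)·Σ_{i=1}^{N} z_i, and let τ be a uniformly distributed random permutation of {1,...,N}. Then the variance over τ of D = (1/m)·Σ_{i=1}^{m} z_{τ(i)} − (1/n)·Σ_{i=m+1}^{N} z_{τ(i)} equals (N/(m·n·(N−1)))·Σ_{i=1}^{N} (z_i − z̄)². -/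
open Finset

/-- The permuted two-sample mean difference: the first `m` permuted values form the
treatment arm, the remaining `n` the control arm. -/
noncomputable def permMeanDiff (m n : ℕ) (z : Fin (m + n) → ℝ)
    (τ : Equiv.Perm (Fin (m + n))) : ℝ :=
  (∑ i ∈ Finset.univ.filter (fun i : Fin (m + n) => (i : ℕ) < m), z (τ i)) / (m : ℝ)
    - (∑ i ∈ Finset.univ.filter (fun i : Fin (m + n) => m ≤ (i : ℕ)), z (τ i)) / (n : ℝ)

section Aux

variable {α : Type*} [DecidableEq α] [Fintype α]

lemma exists_perm_pair {i j k l : α} (hij : i ≠ j) (hkl : k ≠ l) :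
    ∃ c : Equiv.Perm α, c i = k ∧ c j = l := by
  refine ⟨(Equiv.swap i k).trans (Equiv.swap ((Equiv.swap i k) j) l), ?_, ?_⟩
  · have hk1 : k ≠ (Equiv.swap i k) j := by
      have h2 := (Equiv.swap i k).injective.ne hij
      rwa [Equiv.swap_apply_left] at h2
    simp only [Equiv.trans_apply, Equiv.swap_apply_left]
    exact Equiv.swap_apply_of_ne_of_ne hk1 hkl
  · simp only [Equiv.trans_apply, Equiv.swap_apply_left]

lemma sum_perm_mul_right (g : Equiv.Perm α → ℝ) (c : Equiv.Perm α) :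
    ∑ τ : Equiv.Perm α, g (τ * c) = ∑ τ : Equiv.Perm α, g τ :=
  Equiv.sum_comp (Equiv.mulRight c) g

/-- `∑ τ, z (τ i) * z (τ j)` over all permutations. -/
noncomputable def pairF (z : α → ℝ) (i j : α) : ℝ :=
  ∑ τ : Equiv.Perm α, z (τ i) * z (τ j)

lemma pairF_diag (z : α → ℝ) (i i' : α) : pairF z i i = pairF z i' i' := by
  have h := sum_perm_mul_right (fun τ => z (τ i') * z (τ i')) (Equiv.swap i' i)
  calc pairF z i i
      = ∑ τ : Equiv.Perm α,
          z ((τ * Equiv.swap i' i) i') * z ((τ * Equiv.swap i' i) i') := by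
        simp [Equiv.Perm.mul_apply, pairF]
    _ = pairF z i' i' := h

lemma pairF_off (z : α → ℝ) {i j i' j' : α} (hij : i ≠ j) (h' : i' ≠ j') :
    pairF z i j = pairF z i' j' := by
  obtain ⟨c, hc1, hc2⟩ := exists_perm_pair h' hij
  have h := sum_perm_mul_right (fun τ => z (τ i') * z (τ j')) c
  calc pairF z i j
      = ∑ τ : Equiv.Perm α, z ((τ * c) i') * z ((τ * c) j') := by
        simp [Equiv.Perm.mul_apply, hc1, hc2, pairF]
    _ = pairF z i' j' := h

lemma card_fiber_one (i0 : α) (k k' : α) :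
    (univ.filter fun τ : Equiv.Perm α => τ i0 = k).card
      = (univ.filter fun τ : Equiv.Perm α => τ i0 = k').card := by
  apply Finset.card_bij' (fun τ _ => Equiv.swap k k' * τ) (fun τ _ => Equiv.swap k k' * τ)
  · intro τ hτ
    simp only [mem_filter, mem_univ, true_and] at hτ ⊢
    simp [Equiv.Perm.mul_apply, hτ]
  · intro τ hτ
    simp only [mem_filter, mem_univ, true_and] at hτ ⊢
    simp [Equiv.Perm.mul_apply, hτ, Equiv.swap_apply_right]
  · intro τ _; simp [← mul_assoc]
  · intro τ _; simp [← mul_assoc]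

lemma card_fiber_two {i0 i1 : α} {k l k' l' : α} (hkl : k ≠ l) (hkl' : k' ≠ l') :
    (univ.filter fun τ : Equiv.Perm α => τ i0 = k ∧ τ i1 = l).card
      = (univ.filter fun τ : Equiv.Perm α => τ i0 = k' ∧ τ i1 = l').card := by
  obtain ⟨d, hd1, hd2⟩ := exists_perm_pair hkl hkl'
  apply Finset.card_bij' (fun τ _ => (d : Equiv.Perm α) * τ) (fun τ _ => d⁻¹ * τ)
  · intro τ hτ
    simp only [mem_filter, mem_univ, true_and] at hτ ⊢
    simp [Equiv.Perm.mul_apply, hτ.1, hτ.2, hd1, hd2]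
  · intro τ hτ
    simp only [mem_filter, mem_univ, true_and, Equiv.Perm.mul_apply] at hτ ⊢
    rw [hτ.1, hτ.2, ← hd1, ← hd2]
    simp
  · intro τ _; simp [← mul_assoc]
  · intro τ _; simp [← mul_assoc]

lemma sum_single_sq (z : α → ℝ) (i0 : α) :
    (Fintype.card α : ℝ) * pairF z i0 i0
      = (Fintype.card (Equiv.Perm α) : ℝ) * ∑ k, z k ^ 2 := by
  classical
  have hfib : pairF z i0 i0
      = ∑ k, ((univ.filter fun τ : Equiv.Perm α => τ i0 = k).card : ℝ) * z k ^ 2 := by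
    rw [pairF, ← Finset.sum_fiberwise_of_maps_to (g := fun τ : Equiv.Perm α => τ i0)
      (fun τ _ => mem_univ (τ i0)) (fun τ => z (τ i0) * z (τ i0))]
    refine Finset.sum_congr rfl fun k _ => ?_
    calc ∑ τ ∈ univ.filter (fun τ : Equiv.Perm α => τ i0 = k), z (τ i0) * z (τ i0)
        = ∑ _τ ∈ univ.filter (fun τ : Equiv.Perm α => τ i0 = k), z k ^ 2 :=
          Finset.sum_congr rfl fun τ hτ => by
            simp only [mem_filter] at hτ; rw [hτ.2, sq]
      _ = _ := by rw [Finset.sum_const, nsmul_eq_mul]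
  have hcardsum : Fintype.card (Equiv.Perm α)
      = ∑ k : α, (univ.filter fun τ : Equiv.Perm α => τ i0 = k).card := by
    rw [← Finset.card_univ]
    exact Finset.card_eq_sum_card_fiberwise fun τ _ => mem_univ (τ i0)
  have hconst : ∀ k : α, (univ.filter fun τ : Equiv.Perm α => τ i0 = k).card
      = (univ.filter fun τ : Equiv.Perm α => τ i0 = i0).card :=
    fun k => card_fiber_one i0 k i0
  set c1 := (univ.filter fun τ : Equiv.Perm α => τ i0 = i0).card with hc1def
  have h1 : ∑ k, ((univ.filter fun τ : Equiv.Perm α => τ i0 = k).card : ℝ) * z k ^ 2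
      = (c1 : ℝ) * ∑ k, z k ^ 2 := by
    rw [Finset.mul_sum]
    exact Finset.sum_congr rfl fun k _ => by rw [hconst k]
  have h2 : Fintype.card (Equiv.Perm α) = Fintype.card α * c1 := by
    rw [hcardsum, Finset.sum_congr rfl fun k _ => hconst k, Finset.sum_const, smul_eq_mul,
      Finset.card_univ]
  rw [hfib, h1, h2]
  push_cast
  ring

lemma sum_pair_offdiag (z : α → ℝ) {i0 i1 : α} (h01 : i0 ≠ i1) :
    (Fintype.card α : ℝ) * ((Fintype.card α : ℝ) - 1) * pairF z i0 i1
      = (Fintype.card (Equiv.Perm α) : ℝ) * ((∑ k, z k) ^ 2 - ∑ k, z k ^ 2) := by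
  classical
  have hmaps : ∀ τ : Equiv.Perm α, τ ∈ (univ : Finset (Equiv.Perm α)) →
      (τ i0, τ i1) ∈ (univ : Finset α).offDiag := by
    intro τ _
    simp only [mem_offDiag, mem_univ, true_and]
    exact fun h => h01 (τ.injective h)
  have hfib : pairF z i0 i1
      = ∑ p ∈ (univ : Finset α).offDiag,
          ((univ.filter fun τ : Equiv.Perm α => (τ i0, τ i1) = p).card : ℝ) * (z p.1 * z p.2) := by
    rw [pairF, ← Finset.sum_fiberwise_of_maps_to (g := fun τ : Equiv.Perm α => (τ i0, τ i1))
      hmaps (fun τ => z (τ i0) * z (τ i1))]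
    refine Finset.sum_congr rfl fun p _ => ?_
    calc ∑ τ ∈ univ.filter (fun τ : Equiv.Perm α => (τ i0, τ i1) = p), z (τ i0) * z (τ i1)
        = ∑ _τ ∈ univ.filter (fun τ : Equiv.Perm α => (τ i0, τ i1) = p), z p.1 * z p.2 :=
          Finset.sum_congr rfl fun τ hτ => by
            simp only [mem_filter] at hτ
            rw [← hτ.2]
      _ = _ := by rw [Finset.sum_const, nsmul_eq_mul]
  have hcardsum : Fintype.card (Equiv.Perm α)
      = ∑ p ∈ (univ : Finset α).offDiag,
          (univ.filter fun τ : Equiv.Perm α => (τ i0, τ i1) = p).card := by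
    rw [← Finset.card_univ]
    exact Finset.card_eq_sum_card_fiberwise hmaps
  have hfilter_eq : ∀ p : α × α,
      (univ.filter fun τ : Equiv.Perm α => (τ i0, τ i1) = p)
        = (univ.filter fun τ : Equiv.Perm α => τ i0 = p.1 ∧ τ i1 = p.2) := by
    intro p
    apply Finset.filter_congr
    intro τ _
    simp [Prod.ext_iff]
  set c2 := (univ.filter fun τ : Equiv.Perm α => τ i0 = i0 ∧ τ i1 = i1).card with hc2def
  have hconst : ∀ p ∈ (univ : Finset α).offDiag,
      (univ.filter fun τ : Equiv.Perm α => (τ i0, τ i1) = p).card = c2 := by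
    intro p hp
    rw [hfilter_eq]
    simp only [mem_offDiag, mem_univ, true_and] at hp
    exact card_fiber_two hp h01
  have h1 : ∑ p ∈ (univ : Finset α).offDiag,
        ((univ.filter fun τ : Equiv.Perm α => (τ i0, τ i1) = p).card : ℝ) * (z p.1 * z p.2)
      = (c2 : ℝ) * ∑ p ∈ (univ : Finset α).offDiag, z p.1 * z p.2 := by
    rw [Finset.mul_sum]
    exact Finset.sum_congr rfl fun p hp => by rw [hconst p hp]
  have h2 : Fintype.card (Equiv.Perm α)
      = (Fintype.card α * Fintype.card α - Fintype.card α) * c2 := by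
    rw [hcardsum, Finset.sum_congr rfl hconst, Finset.sum_const, smul_eq_mul,
      Finset.offDiag_card, Finset.card_univ]
  have h3 : ∑ p ∈ (univ : Finset α).offDiag, z p.1 * z p.2
      = (∑ k, z k) ^ 2 - ∑ k, z k ^ 2 := by
    have hsplit : ∑ p ∈ (univ : Finset α) ×ˢ (univ : Finset α), z p.1 * z p.2
        = (∑ p ∈ ((univ : Finset α) ×ˢ univ).filter fun p => p.1 = p.2, z p.1 * z p.2)
          + ∑ p ∈ (univ : Finset α).offDiag, z p.1 * z p.2 := by
      rw [show (univ : Finset α).offDiag = ((univ : Finset α) ×ˢ univ).filter (fun p => ¬p.1 = p.2) from by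
        ext p; simp [Finset.mem_offDiag]]
      exact (Finset.sum_filter_add_sum_filter_not _ (fun p : α × α => p.1 = p.2) (fun p : α × α => z p.1 * z p.2)).symm
    have hprod : ∑ p ∈ (univ : Finset α) ×ˢ (univ : Finset α), z p.1 * z p.2
        = (∑ k, z k) ^ 2 := by
      rw [Finset.sum_product, sq, Finset.sum_mul_sum]
    have hdiag : ∑ p ∈ ((univ : Finset α) ×ˢ univ).filter (fun p => p.1 = p.2), z p.1 * z p.2
        = ∑ k, z k ^ 2 := by
      refine Finset.sum_nbij' (fun p => p.1) (fun k => (k, k)) ?_ ?_ ?_ ?_ ?_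
      · intro p _; exact mem_univ _
      · intro k _; simp
      · intro p hp
        simp only [Finset.mem_filter] at hp
        exact Prod.ext rfl hp.2
      · intro k _; rfl
      · intro p hp
        simp only [Finset.mem_filter] at hp
        show z p.1 * z p.2 = z p.1 ^ 2
        rw [hp.2]; ring
    linarith [hsplit, hprod, hdiag]
  have hNle : Fintype.card α ≤ Fintype.card α * Fintype.card α :=
    Nat.le_mul_of_pos_left _ (Fintype.card_pos_iff.mpr ⟨i0⟩)
  rw [hfib, h1, h2, h3]
  push_cast [hNle]
  ring

end Aux

/-- For a fixed pooled sample `z : Fin (m+n) → ℝ` with grand mean `z̄`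
and a uniformly distributed random permutation `τ` of the `N = m + n ≥ 2` indices, the
variance over `τ` of the permuted two-sample mean difference `D` equals
`(N/(m n (N−1))) ∑_i (z_i − z̄)²`. -/
theorem variance_of_permuted_mean_difference
    (m n : ℕ) (hm : 1 ≤ m) (hn : 1 ≤ n) (hN : 2 ≤ m + n) (z : Fin (m + n) → ℝ) :
    (∑ τ : Equiv.Perm (Fin (m + n)),
          (permMeanDiff m n z τ
            - (∑ τ' : Equiv.Perm (Fin (m + n)), permMeanDiff m n z τ')
                / (Fintype.card (Equiv.Perm (Fin (m + n))) : ℝ)) ^ 2)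
        / (Fintype.card (Equiv.Perm (Fin (m + n))) : ℝ)
      = (((m + n : ℕ) : ℝ) / ((m : ℝ) * (n : ℝ) * (((m + n : ℕ) : ℝ) - 1)))
          * ∑ i, (z i - (∑ i', z i') / ((m + n : ℕ) : ℝ)) ^ 2 := by
  classical
  have hm0 : (m : ℝ) ≠ 0 := Nat.cast_ne_zero.mpr (by omega)
  have hn0 : (n : ℝ) ≠ 0 := Nat.cast_ne_zero.mpr (by omega)
  have hNr : (2 : ℝ) ≤ ((m + n : ℕ) : ℝ) := by exact_mod_cast hN
  have hN0 : ((m + n : ℕ) : ℝ) ≠ 0 := by intro h; rw [h] at hNr; linarith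
  have hN1 : ((m + n : ℕ) : ℝ) - 1 ≠ 0 := by intro h; nlinarith
  have hF0 : (Fintype.card (Equiv.Perm (Fin (m + n))) : ℝ) ≠ 0 :=
    Nat.cast_ne_zero.mpr Fintype.card_ne_zero
  set i0 : Fin (m + n) := ⟨0, by omega⟩ with hi0
  set i1 : Fin (m + n) := ⟨1, by omega⟩ with hi1
  have h01 : i0 ≠ i1 := by simp [hi0, hi1, Fin.ext_iff]
  set c : Fin (m + n) → ℝ := fun i => if (i : ℕ) < m then (m : ℝ)⁻¹ else -(n : ℝ)⁻¹ with hcdef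
  -- cardinalities of the two index groups
  have hPcard : (univ.filter fun i : Fin (m + n) => (i : ℕ) < m).card = m := by
    have key : (univ.filter fun i : Fin (m + n) => (i : ℕ) < m)
        = Finset.map (Fin.castAddEmb n) univ := by
      ext i
      constructor
      · intro h
        rcases Finset.mem_filter.mp h with ⟨-, h2⟩
        refine Finset.mem_map.mpr ⟨⟨(i : ℕ), h2⟩, mem_univ _, Fin.ext ?_⟩
        simp [Fin.castAddEmb]
      · intro h
        rcases Finset.mem_map.mp h with ⟨a, -, rfl⟩
        refine Finset.mem_filter.mpr ⟨mem_univ _, ?_⟩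
        simpa [Fin.castAddEmb] using a.isLt
    rw [key, Finset.card_map, Finset.card_univ, Fintype.card_fin]
  have hQcard : (univ.filter fun i : Fin (m + n) => ¬(i : ℕ) < m).card = n := by
    have h := Finset.card_filter_add_card_filter_not
      (s := (univ : Finset (Fin (m + n)))) (p := fun i : Fin (m + n) => (i : ℕ) < m)
    rw [Finset.card_univ, Fintype.card_fin, hPcard] at h
    omega
  -- rewrite the statistic as a linear combination
  have hD : ∀ τ : Equiv.Perm (Fin (m + n)), permMeanDiff m n z τ = ∑ i, c i * z (τ i) := by
    intro τ
    have hfeq : (univ.filter fun i : Fin (m + n) => ¬(i : ℕ) < m)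
        = univ.filter fun i : Fin (m + n) => m ≤ (i : ℕ) := by
      ext i; simp [not_lt]
    rw [← Finset.sum_filter_add_sum_filter_not univ (fun i : Fin (m + n) => (i : ℕ) < m)
      (fun i => c i * z (τ i))]
    have e1 : ∀ i ∈ univ.filter (fun i : Fin (m + n) => (i : ℕ) < m),
        c i * z (τ i) = z (τ i) * (m : ℝ)⁻¹ := by
      intro i hi
      simp only [Finset.mem_filter] at hi
      simp only [hcdef, if_pos hi.2]
      ring
    have e2 : ∀ i ∈ univ.filter (fun i : Fin (m + n) => ¬(i : ℕ) < m),
        c i * z (τ i) = -(z (τ i) * (n : ℝ)⁻¹) := by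
      intro i hi
      simp only [Finset.mem_filter] at hi
      simp only [hcdef, if_neg hi.2]
      ring
    rw [Finset.sum_congr rfl e1, Finset.sum_congr rfl e2, ← Finset.sum_mul, Finset.sum_neg_distrib,
      ← Finset.sum_mul, hfeq, permMeanDiff]
    rw [div_eq_mul_inv, div_eq_mul_inv]
    ring
  -- coefficient sums
  have hSc : ∑ i, c i = 0 := by
    rw [← Finset.sum_filter_add_sum_filter_not univ (fun i : Fin (m + n) => (i : ℕ) < m) c]
    have e1 : ∀ i ∈ univ.filter (fun i : Fin (m + n) => (i : ℕ) < m), c i = (m : ℝ)⁻¹ := by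
      intro i hi
      simp only [Finset.mem_filter] at hi
      simp [hcdef, if_pos hi.2]
    have e2 : ∀ i ∈ univ.filter (fun i : Fin (m + n) => ¬(i : ℕ) < m), c i = -(n : ℝ)⁻¹ := by
      intro i hi
      simp only [Finset.mem_filter] at hi
      simp [hcdef, if_neg hi.2]
    rw [Finset.sum_congr rfl e1, Finset.sum_congr rfl e2, Finset.sum_const, Finset.sum_const,
      hPcard, hQcard, nsmul_eq_mul, nsmul_eq_mul]
    field_simp
    norm_num
  have hSc2 : ∑ i, c i * c i = (m : ℝ)⁻¹ + (n : ℝ)⁻¹ := by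
    rw [← Finset.sum_filter_add_sum_filter_not univ (fun i : Fin (m + n) => (i : ℕ) < m)
      (fun i => c i * c i)]
    have e1 : ∀ i ∈ univ.filter (fun i : Fin (m + n) => (i : ℕ) < m),
        c i * c i = (m : ℝ)⁻¹ * (m : ℝ)⁻¹ := by
      intro i hi
      simp only [Finset.mem_filter] at hi
      simp [hcdef, if_pos hi.2]
    have e2 : ∀ i ∈ univ.filter (fun i : Fin (m + n) => ¬(i : ℕ) < m),
        c i * c i = (n : ℝ)⁻¹ * (n : ℝ)⁻¹ := by
      intro i hi
      simp only [Finset.mem_filter] at hi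
      simp [hcdef, if_neg hi.2]
    rw [Finset.sum_congr rfl e1, Finset.sum_congr rfl e2, Finset.sum_const, Finset.sum_const,
      hPcard, hQcard, nsmul_eq_mul, nsmul_eq_mul]
    field_simp
  -- mean is zero
  have hsingle : ∀ i : Fin (m + n), (∑ τ : Equiv.Perm (Fin (m + n)), z (τ i))
      = ∑ τ : Equiv.Perm (Fin (m + n)), z (τ i0) := by
    intro i
    have h := sum_perm_mul_right (fun τ => z (τ i0)) (Equiv.swap i0 i)
    calc ∑ τ : Equiv.Perm (Fin (m + n)), z (τ i)
        = ∑ τ : Equiv.Perm (Fin (m + n)), z ((τ * Equiv.swap i0 i) i0) := by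
          simp [Equiv.Perm.mul_apply]
      _ = ∑ τ : Equiv.Perm (Fin (m + n)), z (τ i0) := h
  have hmean : ∑ τ : Equiv.Perm (Fin (m + n)), (∑ i, c i * z (τ i)) = 0 := by
    rw [Finset.sum_comm]
    calc ∑ i, ∑ τ : Equiv.Perm (Fin (m + n)), c i * z (τ i)
        = ∑ i : Fin (m + n), c i * ∑ τ : Equiv.Perm (Fin (m + n)), z (τ i0) := by
          refine Finset.sum_congr rfl fun i _ => ?_
          rw [← Finset.mul_sum, hsingle i]
      _ = (∑ i, c i) * ∑ τ : Equiv.Perm (Fin (m + n)), z (τ i0) := by rw [Finset.sum_mul]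
      _ = 0 := by rw [hSc, zero_mul]
  -- sum of squares
  have hsq : ∑ τ : Equiv.Perm (Fin (m + n)), (∑ i, c i * z (τ i)) ^ 2
      = (pairF z i0 i0 - pairF z i0 i1) * ((m : ℝ)⁻¹ + (n : ℝ)⁻¹) := by
    have expand : ∀ τ : Equiv.Perm (Fin (m + n)),
        (∑ i, c i * z (τ i)) ^ 2 = ∑ i, ∑ j, (c i * c j) * (z (τ i) * z (τ j)) := by
      intro τ
      rw [sq, Finset.sum_mul_sum]
      exact Finset.sum_congr rfl fun i _ => Finset.sum_congr rfl fun j _ => by ring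
    rw [Finset.sum_congr rfl fun τ _ => expand τ]
    have step1 : ∑ τ : Equiv.Perm (Fin (m + n)), ∑ i, ∑ j, (c i * c j) * (z (τ i) * z (τ j))
        = ∑ i, ∑ j, (c i * c j) * pairF z i j := by
      rw [Finset.sum_comm]
      refine Finset.sum_congr rfl fun i _ => ?_
      rw [Finset.sum_comm]
      refine Finset.sum_congr rfl fun j _ => ?_
      rw [pairF, Finset.mul_sum]
    rw [step1]
    have inner : ∀ i : Fin (m + n), ∑ j, (c i * c j) * pairF z i j
        = c i * c i * pairF z i0 i0 + pairF z i0 i1 * (c i * (0 - c i)) := by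
      intro i
      rw [← Finset.add_sum_erase _ _ (mem_univ i)]
      have h1 : pairF z i i = pairF z i0 i0 := pairF_diag z i i0
      have h2 : ∀ j ∈ univ.erase i, (c i * c j) * pairF z i j = pairF z i0 i1 * (c i * c j) := by
        intro j hj
        have hji : i ≠ j := fun h => (Finset.mem_erase.mp hj).1 h.symm
        rw [pairF_off z hji h01]
        ring
      rw [h1, Finset.sum_congr rfl h2, ← Finset.mul_sum, ← Finset.mul_sum,
        Finset.sum_erase_eq_sub (mem_univ i), hSc]
      try ring
    rw [Finset.sum_congr rfl fun i _ => inner i, Finset.sum_add_distrib]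
    have t1 : ∑ i, c i * c i * pairF z i0 i0 = pairF z i0 i0 * ∑ i, c i * c i := by
      rw [Finset.mul_sum]
      exact Finset.sum_congr rfl fun i _ => by ring
    have t2 : ∑ i, pairF z i0 i1 * (c i * (0 - c i))
        = -(pairF z i0 i1 * ∑ i, c i * c i) := by
      rw [Finset.mul_sum, ← Finset.sum_neg_distrib]
      exact Finset.sum_congr rfl fun i _ => by ring
    rw [t1, t2, hSc2]
    ring
  -- values of the two pair sums
  have hA : ((m + n : ℕ) : ℝ) * pairF z i0 i0
      = (Fintype.card (Equiv.Perm (Fin (m + n))) : ℝ) * ∑ k, z k ^ 2 := by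
    simpa using sum_single_sq z i0
  have hB : ((m + n : ℕ) : ℝ) * (((m + n : ℕ) : ℝ) - 1) * pairF z i0 i1
      = (Fintype.card (Equiv.Perm (Fin (m + n))) : ℝ)
          * ((∑ k, z k) ^ 2 - ∑ k, z k ^ 2) := by
    simpa using sum_pair_offdiag z h01
  have hA' : pairF z i0 i0
      = (Fintype.card (Equiv.Perm (Fin (m + n))) : ℝ) * (∑ k, z k ^ 2) / ((m + n : ℕ) : ℝ) := by
    rw [eq_div_iff hN0]
    linear_combination hA
  have hB' : pairF z i0 i1
      = (Fintype.card (Equiv.Perm (Fin (m + n))) : ℝ) * ((∑ k, z k) ^ 2 - ∑ k, z k ^ 2)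
          / (((m + n : ℕ) : ℝ) * (((m + n : ℕ) : ℝ) - 1)) := by
    rw [eq_div_iff (mul_ne_zero hN0 hN1)]
    linear_combination hB
  -- expansion of the centered sum of squares
  have hexp : ∑ i, (z i - (∑ i', z i') / ((m + n : ℕ) : ℝ)) ^ 2
      = (∑ k, z k ^ 2) - (∑ k, z k) ^ 2 / ((m + n : ℕ) : ℝ) := by
    have e : ∀ i : Fin (m + n), (z i - (∑ i', z i') / ((m + n : ℕ) : ℝ)) ^ 2
        = z i ^ 2 - (2 * (∑ i', z i') / ((m + n : ℕ) : ℝ)) * z i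
            + ((∑ i', z i') / ((m + n : ℕ) : ℝ)) ^ 2 := fun i => by ring
    rw [Finset.sum_congr rfl fun i _ => e i, Finset.sum_add_distrib, Finset.sum_sub_distrib,
      ← Finset.mul_sum, Finset.sum_const, Finset.card_univ, Fintype.card_fin, nsmul_eq_mul]
    field_simp
    ring
  -- assemble
  simp only [hD]
  rw [hmean]
  simp only [zero_div, sub_zero]
  rw [hsq, hexp, hA', hB']
  push_cast
  push_cast at hN0 hN1
  field_simp [hm0, hn0, hN0, hN1, hF0]
  ring
end

section
/- Let (S_n) be a sequence of real-valued random variables, c ∈ ℝ a constant, and (c_n) a sequence of real-valued random variables on the same probability spaces with c_n → c in probability. Suppose that for every ε > 0 there exists δ > 0 such that limsup_n P(c − δ ≤ S_n ≤ c + δ) ≤ ε. Then P(𝟙{S_n ≥ c_n} ≠ 𝟙{S_n ≥ c}) → 0 as n → ∞; in particular E|𝟙{S_n ≥ c_n} − 𝟙{S_n ≥ c}| → 0. -/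
open MeasureTheory Filter
open scoped ENNReal NNReal

/-- If test statistics `S n` are compared against data-dependent
critical values `cn n` converging in probability to a deterministic critical value `c`,
and `S n` puts asymptotically small mass near `c` (for every `ε > 0` there is `δ > 0`
with `limsup_n P(c − δ ≤ S_n ≤ c + δ) ≤ ε`), then
`P(𝟙{S_n ≥ c_n} ≠ 𝟙{S_n ≥ c}) → 0` and `E|𝟙{S_n ≥ c_n} − 𝟙{S_n ≥ c}| → 0`. -/
theorem indicator_of_data_dependent_critical_value
    {Ω : Type*} [MeasurableSpace Ω] (P : Measure Ω) [IsProbabilityMeasure P]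
    (S : ℕ → Ω → ℝ) (cn : ℕ → Ω → ℝ) (c : ℝ)
    (hS : ∀ n, Measurable (S n)) (hcn : ∀ n, Measurable (cn n))
    (hconv : TendstoInMeasure P cn atTop (fun _ => c))
    (hanti : ∀ ε : ℝ, 0 < ε → ∃ δ : ℝ, 0 < δ ∧
      limsup (fun n => P {ω | c - δ ≤ S n ω ∧ S n ω ≤ c + δ}) atTop
        ≤ ENNReal.ofReal ε) :
    Tendsto (fun n => P {ω | ¬ ((cn n ω ≤ S n ω) ↔ (c ≤ S n ω))}) atTop (nhds 0)
    ∧ Tendsto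
        (fun n => ∫ ω, |(if cn n ω ≤ S n ω then (1 : ℝ) else 0)
          - (if c ≤ S n ω then (1 : ℝ) else 0)| ∂P)
        atTop (nhds 0) := by
  have hbadmeas : ∀ n, MeasurableSet {ω | ¬ ((cn n ω ≤ S n ω) ↔ (c ≤ S n ω))} := by
    intro n
    have h1 : MeasurableSet {ω | cn n ω ≤ S n ω} := measurableSet_le (hcn n) (hS n)
    have h2 : MeasurableSet {ω | c ≤ S n ω} := measurableSet_le measurable_const (hS n)
    have : {ω | ¬ ((cn n ω ≤ S n ω) ↔ (c ≤ S n ω))}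
        = ({ω | cn n ω ≤ S n ω} \ {ω | c ≤ S n ω})
          ∪ ({ω | c ≤ S n ω} \ {ω | cn n ω ≤ S n ω}) := by
      ext ω; simp only [Set.mem_setOf_eq, Set.mem_union, Set.mem_diff, Set.mem_setOf_eq]
      tauto
    rw [this]
    exact (h1.diff h2).union (h2.diff h1)
  have hmain : Tendsto (fun n => P {ω | ¬ ((cn n ω ≤ S n ω) ↔ (c ≤ S n ω))})
      atTop (nhds 0) := by
    rw [ENNReal.tendsto_nhds_zero]
    intro ε hε
    obtain ⟨r, hr0, hrε⟩ := ENNReal.lt_iff_exists_nnreal_btwn.mp hε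
    have hr0' : (0 : ℝ) < (r : ℝ) := by exact_mod_cast hr0
    obtain ⟨δ, hδ, hB⟩ := hanti ((r : ℝ) / 2) (by positivity)
    -- the "near c" part
    have hBlt : limsup (fun n => P {ω | c - δ ≤ S n ω ∧ S n ω ≤ c + δ}) atTop
        < (r : ℝ≥0∞) := by
      refine lt_of_le_of_lt hB ?_
      rw [← ENNReal.ofReal_coe_nnreal]
      exact ENNReal.ofReal_lt_ofReal_iff hr0' |>.mpr (by linarith)
    have hBev : ∀ᶠ n in atTop,
        P {ω | c - δ ≤ S n ω ∧ S n ω ≤ c + δ} < (r : ℝ≥0∞) :=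
      eventually_lt_of_limsup_lt hBlt
    -- the convergence-in-measure part
    have hεr : (0 : ℝ≥0∞) < ε - r := by
      rw [tsub_pos_iff_lt]; exact hrε
    have hAev : ∀ᶠ n in atTop,
        P {ω | δ ≤ dist (cn n ω) c} < ε - r :=
      (tendstoInMeasure_iff_dist.mp hconv δ hδ).eventually_lt_const hεr
    filter_upwards [hBev, hAev] with n hBn hAn
    have hsub : {ω | ¬ ((cn n ω ≤ S n ω) ↔ (c ≤ S n ω))}
        ⊆ {ω | δ ≤ dist (cn n ω) c} ∪ {ω | c - δ ≤ S n ω ∧ S n ω ≤ c + δ} := by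
      intro ω hω
      by_cases hA : δ ≤ dist (cn n ω) c
      · exact Or.inl hA
      · right
        push_neg at hA
        rw [Real.dist_eq, abs_lt] at hA
        simp only [Set.mem_setOf_eq] at hω ⊢
        by_cases h1 : cn n ω ≤ S n ω
        · have h2 : ¬ c ≤ S n ω := fun h => hω ⟨fun _ => h, fun _ => h1⟩
          push_neg at h2
          constructor <;> linarith [hA.1, hA.2]
        · have h2 : c ≤ S n ω := by
            by_contra h2
            exact hω ⟨fun h => absurd h h1, fun h => absurd h h2⟩
          push_neg at h1
          constructor <;> linarith [hA.1, hA.2]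
    calc P {ω | ¬ ((cn n ω ≤ S n ω) ↔ (c ≤ S n ω))}
        ≤ P ({ω | δ ≤ dist (cn n ω) c} ∪ {ω | c - δ ≤ S n ω ∧ S n ω ≤ c + δ}) :=
          measure_mono hsub
      _ ≤ P {ω | δ ≤ dist (cn n ω) c} + P {ω | c - δ ≤ S n ω ∧ S n ω ≤ c + δ} :=
          measure_union_le _ _
      _ ≤ (ε - r) + r := add_le_add hAn.le hBn.le
      _ = ε := tsub_add_cancel_of_le hrε.le
  refine ⟨hmain, ?_⟩
  have heq : ∀ n, (∫ ω, |(if cn n ω ≤ S n ω then (1 : ℝ) else 0)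
      - (if c ≤ S n ω then (1 : ℝ) else 0)| ∂P)
      = (P {ω | ¬ ((cn n ω ≤ S n ω) ↔ (c ≤ S n ω))}).toReal := by
    intro n
    have : (fun ω => |(if cn n ω ≤ S n ω then (1 : ℝ) else 0)
        - (if c ≤ S n ω then (1 : ℝ) else 0)|)
        = Set.indicator {ω | ¬ ((cn n ω ≤ S n ω) ↔ (c ≤ S n ω))} (fun _ => (1 : ℝ)) := by
      funext ω
      by_cases h1 : cn n ω ≤ S n ω <;> by_cases h2 : c ≤ S n ω <;>
        simp [Set.indicator, h1, h2]
    rw [this, integral_indicator_const (1 : ℝ) (hbadmeas n), smul_eq_mul, mul_one, measureReal_def]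
  simp only [heq]
  have := (ENNReal.tendsto_toReal (by simp : (0 : ℝ≥0∞) ≠ ⊤)).comp hmain
  exact this
end
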